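/- Let x* be a feasible allocation maximizing Π_k v_k(x_k)^{b_k} over all feasible allocations, and for each player i let x*_{-i} be a feasible allocation maximizing Π_{k≠i} v_k(x_k)^{b_k}. Assume each v_k is concave, v_k(x*_k) > 0 for all k, v_k((x*_{-i})_k) > 0 for all k ≠ i, and v_i(0) = 0 for all i. Then the allocation x produced by the Partial Allocation mechanism, which gives player i the bundle f_i·x*_i with f_i = (Π_{k≠i} v_k(x*_k)^{b_k} / Π_{k≠i} v_k((x*_{-i})_k)^{b_k})^{1/b_i}, satisfies v_i(x_i) ≥ (1/e)·v_i(x*_i) for every player i, where e is Euler's number. -/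

import Mathlib

open Finset

/-- Corollary. The Partial Allocation mechanism always yields an allocation
giving every player at least a `1/e` fraction of her Proportionally Fair valuation:
`v_i(f_i • x*_i) ≥ (1/e) · v_i(x*_i)` for every player `i`. -/
theorem stmt_5 {n m : ℕ} (hn : 2 ≤ n)
    (v : Fin n → (Fin m → ℝ) → ℝ) (b : Fin n → ℝ)
    (hb : ∀ k, 1 ≤ b k)
    (hv_nonneg : ∀ k (y : Fin m → ℝ), (∀ j, 0 ≤ y j) → 0 ≤ v k y)
    (hv_hom : ∀ k (c : ℝ), 0 ≤ c → ∀ y : Fin m → ℝ, v k (c • y) = c * v k y)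
    (hv_concave : ∀ k, ConcaveOn ℝ Set.univ (v k))
    (hv_zero : ∀ k, v k 0 = 0)
    (xstar : Fin n → Fin m → ℝ)
    (hxstar_nonneg : ∀ k j, 0 ≤ xstar k j) (hxstar_feas : ∀ j, ∑ k, xstar k j ≤ 1)
    (hxstar_max : ∀ x : Fin n → Fin m → ℝ,
      (∀ k j, 0 ≤ x k j) → (∀ j, ∑ k, x k j ≤ 1) →
      ∏ k, v k (x k) ^ b k ≤ ∏ k, v k (xstar k) ^ b k)
    (xmi : Fin n → Fin n → Fin m → ℝ)
    (hxmi_nonneg : ∀ i k j, 0 ≤ xmi i k j) (hxmi_feas : ∀ i j, ∑ k, xmi i k j ≤ 1)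
    (hxmi_max : ∀ i, ∀ x : Fin n → Fin m → ℝ,
      (∀ k j, 0 ≤ x k j) → (∀ j, ∑ k, x k j ≤ 1) →
      ∏ k ∈ univ.erase i, v k (x k) ^ b k ≤ ∏ k ∈ univ.erase i, v k (xmi i k) ^ b k)
    (hpos : ∀ k, 0 < v k (xstar k))
    (hpos' : ∀ i, ∀ k ∈ univ.erase i, 0 < v k (xmi i k)) :
    ∀ i : Fin n,
      (1 / Real.exp 1) * v i (xstar i)
        ≤ v i (((((∏ k ∈ univ.erase i, v k (xstar k) ^ b k) /
            (∏ k ∈ univ.erase i, v k (xmi i k) ^ b k)) ^ (1 / b i))) • xstar i) := by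
  intro i
  have hbi : (0:ℝ) < b i := lt_of_lt_of_le one_pos (hb i)
  set S := (univ : Finset (Fin n)).erase i with hS
  set P := ∏ k ∈ S, v k (xstar k) ^ b k with hPdef
  set Q := ∏ k ∈ S, v k (xmi i k) ^ b k with hQdef
  have hP : 0 < P := Finset.prod_pos fun k _ => Real.rpow_pos_of_pos (hpos k) _
  have hQ : 0 < Q := Finset.prod_pos fun k hk => Real.rpow_pos_of_pos (hpos' i k hk) _
  -- key inequality for each t ∈ (0,1)
  have key : ∀ t : ℝ, 0 < t → t < 1 → (1 - t) ^ (b i) * (P ^ (1-t) * Q ^ t) ≤ P := by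
    intro t ht0 ht1
    have ht0' : (0:ℝ) ≤ t := ht0.le
    have h1t : (0:ℝ) < 1 - t := by linarith
    set y : Fin n → Fin m → ℝ :=
      fun k => (1 - t) • xstar k + t • (if k = i then 0 else xmi i k) with hy
    have hy_nonneg : ∀ k j, 0 ≤ y k j := by
      intro k j
      simp only [hy, Pi.add_apply, Pi.smul_apply, smul_eq_mul]
      have h0 : (0:ℝ) ≤ (if k = i then (0 : Fin m → ℝ) else xmi i k) j := by
        split <;> simp [hxmi_nonneg i k j]
      exact add_nonneg (mul_nonneg h1t.le (hxstar_nonneg k j)) (mul_nonneg ht0' h0)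
    have hy_feas : ∀ j, ∑ k, y k j ≤ 1 := by
      intro j
      have hsum : ∑ k, (if k = i then (0 : Fin m → ℝ) else xmi i k) j ≤ 1 := by
        calc ∑ k, (if k = i then (0 : Fin m → ℝ) else xmi i k) j
            ≤ ∑ k, xmi i k j := by
              refine Finset.sum_le_sum fun k _ => ?_
              split <;> simp [hxmi_nonneg i k j]
          _ ≤ 1 := hxmi_feas i j
      have := hxstar_feas j
      simp only [hy, Pi.add_apply, Pi.smul_apply, smul_eq_mul]
      rw [Finset.sum_add_distrib, ← Finset.mul_sum, ← Finset.mul_sum]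
      nlinarith [this, hsum]
    have h1 := hxstar_max y hy_nonneg hy_feas
    -- split the products at i
    have hsplit1 : ∏ k, v k (y k) ^ b k = v i (y i) ^ b i * ∏ k ∈ S, v k (y k) ^ b k :=
      (Finset.mul_prod_erase univ _ (mem_univ i)).symm
    have hsplit2 : ∏ k, v k (xstar k) ^ b k = v i (xstar i) ^ b i * P :=
      (Finset.mul_prod_erase univ _ (mem_univ i)).symm
    have hyi : v i (y i) = (1 - t) * v i (xstar i) := by
      simp only [hy, eq_self_iff_true, if_true, smul_zero, add_zero]
      exact hv_hom i (1-t) h1t.le (xstar i)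
    -- lower bound the product over S
    have hlow : P ^ (1-t) * Q ^ t ≤ ∏ k ∈ S, v k (y k) ^ b k := by
      have step : ∀ k ∈ S, (v k (xstar k) ^ b k) ^ (1-t) * (v k (xmi i k) ^ b k) ^ t
          ≤ v k (y k) ^ b k := by
        intro k hk
        have hkne : k ≠ i := Finset.ne_of_mem_erase hk
        have hvk : 0 < v k (xstar k) := hpos k
        have hvk' : 0 < v k (xmi i k) := hpos' i k hk
        have hconc : (1-t) * v k (xstar k) + t * v k (xmi i k) ≤ v k (y k) := by
          have := (hv_concave k).2 (Set.mem_univ (xstar k)) (Set.mem_univ (xmi i k))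
            h1t.le ht0' (by ring)
          simpa [hy, if_neg hkne] using this
        have hgm : v k (xstar k) ^ (1-t) * v k (xmi i k) ^ t
            ≤ (1-t) * v k (xstar k) + t * v k (xmi i k) :=
          Real.geom_mean_le_arith_mean2_weighted h1t.le ht0' hvk.le hvk'.le (by ring)
        have hbase : v k (xstar k) ^ (1-t) * v k (xmi i k) ^ t ≤ v k (y k) := hgm.trans hconc
        have hbasepos : 0 < v k (xstar k) ^ (1-t) * v k (xmi i k) ^ t :=
          mul_pos (Real.rpow_pos_of_pos hvk _) (Real.rpow_pos_of_pos hvk' _)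
        calc (v k (xstar k) ^ b k) ^ (1-t) * (v k (xmi i k) ^ b k) ^ t
            = (v k (xstar k) ^ (1-t) * v k (xmi i k) ^ t) ^ b k := by
              rw [Real.mul_rpow (Real.rpow_nonneg hvk.le _) (Real.rpow_nonneg hvk'.le _),
                ← Real.rpow_mul hvk.le, ← Real.rpow_mul hvk'.le,
                ← Real.rpow_mul hvk.le, ← Real.rpow_mul hvk'.le,
                mul_comm (b k) (1-t), mul_comm (b k) t]
          _ ≤ v k (y k) ^ b k :=
              Real.rpow_le_rpow hbasepos.le hbase (le_trans zero_le_one (hb k))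
      calc P ^ (1-t) * Q ^ t
          = ∏ k ∈ S, (v k (xstar k) ^ b k) ^ (1-t) * (v k (xmi i k) ^ b k) ^ t := by
            rw [Finset.prod_mul_distrib,
              Real.finset_prod_rpow S _ (fun k _ => (Real.rpow_pos_of_pos (hpos k) _).le),
              Real.finset_prod_rpow S _ (fun k hk => (Real.rpow_pos_of_pos (hpos' i k hk) _).le)]
        _ ≤ ∏ k ∈ S, v k (y k) ^ b k := by
            refine Finset.prod_le_prod (fun k hk => ?_) step
            exact mul_nonneg (Real.rpow_nonneg (Real.rpow_nonneg (hpos k).le _) _)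
              (Real.rpow_nonneg (Real.rpow_nonneg (hpos' i k hk).le _) _)
    have hvi : 0 < v i (xstar i) ^ b i := Real.rpow_pos_of_pos (hpos i) _
    have h2 : v i (y i) ^ b i * (P ^ (1-t) * Q ^ t) ≤ v i (xstar i) ^ b i * P := by
      calc v i (y i) ^ b i * (P ^ (1-t) * Q ^ t)
          ≤ v i (y i) ^ b i * ∏ k ∈ S, v k (y k) ^ b k := by
            refine mul_le_mul_of_nonneg_left hlow (Real.rpow_nonneg ?_ _)
            rw [hyi]; exact mul_nonneg h1t.le (hpos i).le
        _ = ∏ k, v k (y k) ^ b k := hsplit1.symm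
        _ ≤ ∏ k, v k (xstar k) ^ b k := h1
        _ = v i (xstar i) ^ b i * P := hsplit2
    have hyib : v i (y i) ^ b i = (1-t) ^ b i * v i (xstar i) ^ b i := by
      rw [hyi, Real.mul_rpow h1t.le (hpos i).le]
    rw [hyib] at h2
    have := mul_le_mul_of_nonneg_left h2 (le_of_lt (inv_pos.2 hvi))
    calc (1 - t) ^ (b i) * (P ^ (1-t) * Q ^ t)
        = (v i (xstar i) ^ b i)⁻¹ * ((1-t) ^ b i * v i (xstar i) ^ b i * (P ^ (1-t) * Q ^ t)) := by
          field_simp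
      _ ≤ (v i (xstar i) ^ b i)⁻¹ * (v i (xstar i) ^ b i * P) := this
      _ = P := by field_simp
  -- deduce (1-t) * (log Q - log P) ≤ b i for all t ∈ (0,1)
  set L := Real.log Q - Real.log P with hLdef
  have hlog : ∀ t : ℝ, 0 < t → t < 1 → (1 - t) * L ≤ b i := by
    intro t ht0 ht1
    have h1t : (0:ℝ) < 1 - t := by linarith
    have hk := key t ht0 ht1
    have hPt : P = P ^ (1-t) * P ^ t := by
      rw [← Real.rpow_add hP]; simp
    have hk2 : (1 - t) ^ (b i) * Q ^ t ≤ P ^ t := by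
      have hPpow : 0 < P ^ (1-t) := Real.rpow_pos_of_pos hP _
      calc (1 - t) ^ (b i) * Q ^ t
          = ((1 - t) ^ (b i) * (P ^ (1-t) * Q ^ t)) / P ^ (1-t) := by field_simp
        _ ≤ P / P ^ (1-t) := (div_le_div_iff_of_pos_right hPpow).mpr hk
        _ = P ^ t := by
            rw [eq_comm, eq_div_iff (ne_of_gt hPpow), ← Real.rpow_add hP]
            norm_num
    have hlhs : 0 < (1 - t) ^ (b i) * Q ^ t :=
      mul_pos (Real.rpow_pos_of_pos h1t _) (Real.rpow_pos_of_pos hQ _)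
    have hloglog := Real.log_le_log hlhs hk2
    rw [Real.log_mul (ne_of_gt (Real.rpow_pos_of_pos h1t _)) (ne_of_gt (Real.rpow_pos_of_pos hQ _)),
      Real.log_rpow h1t, Real.log_rpow hQ, Real.log_rpow hP] at hloglog
    -- b i * log (1-t) + t * log Q ≤ t * log P
    have hloginv : -Real.log (1 - t) ≤ t / (1 - t) := by
      have h' := Real.log_le_sub_one_of_pos (show (0:ℝ) < (1-t)⁻¹ from inv_pos.2 h1t)
      rw [Real.log_inv] at h'
      have h'' : (1-t)⁻¹ - 1 = t / (1-t) := by field_simp; ring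
      linarith
    have huineq : (1 - t) * (-Real.log (1-t)) ≤ t := by
      have := (le_div_iff₀ h1t).mp hloginv
      linarith [this]
    have hA : t * L ≤ b i * (-Real.log (1-t)) := by
      have : t * L = t * Real.log Q - t * Real.log P := by rw [hLdef]; ring
      rw [this]; linarith
    have hmain : t * ((1 - t) * L) ≤ t * b i := by
      calc t * ((1-t) * L) = (1-t) * (t * L) := by ring
        _ ≤ (1-t) * (b i * (-Real.log (1-t))) := mul_le_mul_of_nonneg_left hA h1t.le
        _ = b i * ((1-t) * (-Real.log (1-t))) := by ring
        _ ≤ b i * t := mul_le_mul_of_nonneg_left huineq hbi.le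
        _ = t * b i := by ring
    exact le_of_mul_le_mul_left hmain ht0
  -- hence log Q - log P ≤ b i
  have hL : L ≤ b i := by
    by_contra h
    push_neg at h
    have hLpos : 0 < L := lt_trans hbi h
    have hfrac : b i / L < 1 := (div_lt_one hLpos).2 h
    have hfracpos : 0 < b i / L := div_pos hbi hLpos
    set t := (1 - b i / L) / 2 with htdef
    have ht0 : 0 < t := by rw [htdef]; linarith
    have ht1 : t < 1 := by rw [htdef]; linarith
    have hgt : b i / L < 1 - t := by rw [htdef]; linarith
    have hle := hlog t ht0 ht1
    have hlt : b i < (1 - t) * L := by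
      have := mul_lt_mul_of_pos_right hgt hLpos
      rwa [div_mul_cancel₀ _ (ne_of_gt hLpos)] at this
    linarith
  -- so exp(-b i) ≤ P / Q
  have hPQ : Real.exp (-(b i)) ≤ P / Q := by
    have : Real.log (P / Q) = Real.log P - Real.log Q := Real.log_div (ne_of_gt hP) (ne_of_gt hQ)
    have h2 : -(b i) ≤ Real.log (P / Q) := by rw [this]; linarith
    calc Real.exp (-(b i)) ≤ Real.exp (Real.log (P / Q)) := Real.exp_le_exp.2 h2
      _ = P / Q := Real.exp_log (div_pos hP hQ)
  -- conclude
  have hf : Real.exp (-1) ≤ (P / Q) ^ (1 / b i) := by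
    calc Real.exp (-1) = Real.exp (-(b i)) ^ (1 / b i) := by
          rw [← Real.exp_mul]; congr 1; field_simp
      _ ≤ (P / Q) ^ (1 / b i) :=
          Real.rpow_le_rpow (Real.exp_nonneg _) hPQ (by positivity)
  have hhom := hv_hom i ((P / Q) ^ (1 / b i))
    (Real.rpow_nonneg (div_nonneg hP.le hQ.le) _) (xstar i)
  rw [hhom]
  have : 1 / Real.exp 1 = Real.exp (-1) := by rw [Real.exp_neg]; simp
  rw [this]
  exact mul_le_mul_of_nonneg_right hf (hpos i).le
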